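/- Let ΔABC be a Euclidean triangle with side lengths a, b, c (opposite vertices A, B, C) in which every angle is at least ε > 0. If δ < ε²/48 and positive reals a', b', c' satisfy |a' - a| ≤ δa, |b' - b| ≤ δb, |c' - c| ≤ δc, then a', b', c' satisfy the strict triangle inequality (so form a Euclidean triangle). -/

import Mathlib

private lemma aux_key (x y z t : ℝ) (hx : 0 < x) (hy : 0 < y) (hz : 0 < z)
    (ht : 0 < t) (ht1 : t ≤ 1)
    (h1 : t * ((y + z) * (x + y)) ≤ x * z) (h2 : t * ((y + z) * (x + z)) ≤ x * y) :
    t * (x + y + z) ≤ 3 * x := by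
  rcases le_total z y with h | h
  · -- y ≥ z : from h1, x*z ≥ t*y*z so x ≥ t*y ≥ t*(y+z)/2
    have hxy : t * y ≤ x := by
      have h0 : y * z ≤ (y + z) * (x + y) := by nlinarith
      have : t * (y * z) ≤ x * z := le_trans (mul_le_mul_of_nonneg_left h0 ht.le) h1
      nlinarith
    nlinarith
  · have hxz : t * z ≤ x := by
      have h0 : z * y ≤ (y + z) * (x + z) := by nlinarith
      have : t * (z * y) ≤ x * y := le_trans (mul_le_mul_of_nonneg_left h0 ht.le) h2
      nlinarith
    nlinarith

private lemma cos_le_of_arccos_ge {v ε : ℝ} (hv1 : -1 ≤ v) (hv2 : v ≤ 1)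
    (h : Real.arccos v ≥ ε) (hε : 0 ≤ ε) : v ≤ Real.cos ε := by
  have := Real.cos_le_cos_of_nonneg_of_le_pi hε (Real.arccos_le_pi v) h
  rwa [Real.cos_arccos hv1 hv2] at this

private lemma cos_upper {ε : ℝ} (h0 : 0 ≤ ε) (hπ : ε ≤ Real.pi) :
    Real.cos ε ≤ 1 - 2 * (ε / Real.pi) ^ 2 := by
  have hπ0 : 0 < Real.pi := Real.pi_pos
  have hs : 2 / Real.pi * (ε / 2) ≤ Real.sin (ε / 2) :=
    Real.mul_le_sin (by linarith) (by linarith)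
  have hsq : Real.sin (ε / 2) ^ 2 = 1 / 2 - Real.cos ε / 2 := by
    have := Real.sin_sq_eq_half_sub (ε / 2)
    rw [show 2 * (ε / 2) = ε by ring] at this
    exact this
  have h1 : (2 / Real.pi * (ε / 2)) ^ 2 ≤ Real.sin (ε / 2) ^ 2 := by
    apply pow_le_pow_left₀ (by positivity) hs
  rw [hsq] at h1
  have : (2 / Real.pi * (ε / 2)) ^ 2 = (ε / Real.pi) ^ 2 := by
    field_simp
  rw [this] at h1
  linarith

set_option maxHeartbeats 1000000 in
/-- If all the angles (given by the law of cosines) of the Euclidean triangle with side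
lengths `a, b, c` are at least `ε > 0`, `δ < ε²/48`, and `a', b', c'` are positive reals
with `|a'-a| ≤ δa`, `|b'-b| ≤ δb`, `|c'-c| ≤ δc`, then `a', b', c'` satisfy the strict
triangle inequality. -/
theorem perturbed_triangle_inequality (a b c a' b' c' ε δ : ℝ)
    (ha : 0 < a) (hb : 0 < b) (hc : 0 < c)
    (ha' : 0 < a') (hb' : 0 < b') (hc' : 0 < c')
    (htri1 : a < b + c) (htri2 : b < a + c) (htri3 : c < a + b)
    (hε : 0 < ε)
    (hA : Real.arccos ((b ^ 2 + c ^ 2 - a ^ 2) / (2 * b * c)) ≥ ε)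
    (hB : Real.arccos ((a ^ 2 + c ^ 2 - b ^ 2) / (2 * a * c)) ≥ ε)
    (hC : Real.arccos ((a ^ 2 + b ^ 2 - c ^ 2) / (2 * a * b)) ≥ ε)
    (hδ : δ < ε ^ 2 / 48)
    (hpa : |a' - a| ≤ δ * a) (hpb : |b' - b| ≤ δ * b) (hpc : |c' - c| ≤ δ * c) :
    a' < b' + c' ∧ b' < a' + c' ∧ c' < a' + b' := by
  have hπ0 : 0 < Real.pi := Real.pi_pos
  have hεπ : ε ≤ Real.pi := le_trans hA (Real.arccos_le_pi _)
  have hcos : Real.cos ε ≤ 1 - 2 * (ε / Real.pi) ^ 2 := cos_upper hε.le hεπ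
  set t : ℝ := (ε / Real.pi) ^ 2 with ht_def
  have ht : 0 < t := by positivity
  have ht1 : t ≤ 1 := by
    rw [ht_def]
    have h1 : ε / Real.pi ≤ 1 := (div_le_one hπ0).mpr hεπ
    exact pow_le_one₀ (by positivity) h1
  -- each law-of-cosines quotient is in [-1, 1] and ≤ cos ε
  have bound : ∀ u v w : ℝ, 0 < u → 0 < v → 0 < w → u < v + w → v < u + w → w < u + v →
      Real.arccos ((v ^ 2 + w ^ 2 - u ^ 2) / (2 * v * w)) ≥ ε →
      v ^ 2 + w ^ 2 - u ^ 2 ≤ 2 * v * w * (1 - 2 * t) := by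
    intro u v w hu hv hw h1 h2 h3 hang
    have hd : 0 < 2 * v * w := by positivity
    have hv1 : -1 ≤ (v ^ 2 + w ^ 2 - u ^ 2) / (2 * v * w) := by
      rw [le_div_iff₀ hd]; nlinarith
    have hv2 : (v ^ 2 + w ^ 2 - u ^ 2) / (2 * v * w) ≤ 1 := by
      rw [div_le_one hd]; nlinarith
    have := cos_le_of_arccos_ge hv1 hv2 hang hε.le
    have h := le_trans this hcos
    rw [div_le_iff₀ hd] at h
    calc v ^ 2 + w ^ 2 - u ^ 2 ≤ (1 - 2 * t) * (2 * v * w) := h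
      _ = 2 * v * w * (1 - 2 * t) := by ring
  have hA' := bound a b c ha hb hc htri1 htri2 htri3 hA
  have hB' := bound b a c hb ha hc htri2 htri1 (by linarith) hB
  have hC' := bound c a b hc ha hb htri3 (by linarith) (by linarith) hC
  have hx : 0 < b + c - a := by linarith
  have hy : 0 < a + c - b := by linarith
  have hz : 0 < a + b - c := by linarith
  have hax := aux_key (b+c-a) (a+c-b) (a+b-c) t hx hy hz ht ht1
    (by nlinarith [hB']) (by nlinarith [hC'])
  have hay := aux_key (a+c-b) (b+c-a) (a+b-c) t hy hx hz ht ht1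
    (by nlinarith [hA']) (by nlinarith [hC'])
  have haz := aux_key (a+b-c) (b+c-a) (a+c-b) t hz hx hy ht ht1
    (by nlinarith [hA']) (by nlinarith [hB'])
  have hπ4 : Real.pi ≤ 4 := Real.pi_le_four
  have htε : ε ^ 2 / 48 ≤ t / 3 := by
    have hteq : t / 3 = ε ^ 2 / (3 * Real.pi ^ 2) := by
      rw [ht_def, div_pow]; field_simp
    rw [hteq, div_le_div_iff₀ (by norm_num) (by positivity)]
    have h3π : 3 * Real.pi ^ 2 ≤ 48 := by nlinarith
    nlinarith [sq_nonneg ε, mul_le_mul_of_nonneg_left h3π (sq_nonneg ε)]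
  have habc : 0 < a + b + c := by linarith
  have hδt : δ * (a + b + c) < t / 3 * (a + b + c) :=
    mul_lt_mul_of_pos_right (lt_of_lt_of_le hδ htε) habc
  have hpa1 : a' - a ≤ δ * a := (abs_le.mp hpa).2
  have hpa2 : -(δ * a) ≤ a' - a := (abs_le.mp hpa).1
  have hpb1 : b' - b ≤ δ * b := (abs_le.mp hpb).2
  have hpb2 : -(δ * b) ≤ b' - b := (abs_le.mp hpb).1
  have hpc1 : c' - c ≤ δ * c := (abs_le.mp hpc).2
  have hpc2 : -(δ * c) ≤ c' - c := (abs_le.mp hpc).1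
  have hax' : t * (a + b + c) ≤ 3 * (b + c - a) := by linear_combination hax
  have hay' : t * (a + b + c) ≤ 3 * (a + c - b) := by linear_combination hay
  have haz' : t * (a + b + c) ≤ 3 * (a + b - c) := by linear_combination haz
  have hxval : t / 3 * (a + b + c) ≤ b + c - a := by linarith [hax']
  have hyval : t / 3 * (a + b + c) ≤ a + c - b := by linarith [hay']
  have hzval : t / 3 * (a + b + c) ≤ a + b - c := by linarith [haz']
  refine ⟨by linarith, by linarith, by linarith⟩
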